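/- For every integer T ≥ 1 and every x ∈ ℝ^T, the Euclidean norm of the gradient satisfies ‖∇f̄_T(x)‖ ≤ 23·√T. -/

import Mathlib

/-- Ψ(x) = 0 for x ≤ 1/2 and Ψ(x) = exp(1 − 1/(2x−1)²) for x > 1/2. -/
noncomputable def Psi (x : ℝ) : ℝ :=
  if x ≤ 1/2 then 0 else Real.exp (1 - 1/(2*x - 1)^2)

/-- Φ(x) = √e · ∫_{−∞}^x exp(−t²/2) dt. -/
noncomputable def Phi (x : ℝ) : ℝ :=
  Real.sqrt (Real.exp 1) * ∫ t in Set.Iic x, Real.exp (-t^2/2)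

/-- 0-based coordinates of `x : ℝ^T` extended by zero. -/
noncomputable def pad (T : ℕ) (x : Fin T → ℝ) (i : ℕ) : ℝ :=
  if h : i < T then x ⟨i, h⟩ else 0

/-- f̄_T(x) = −Ψ(1)Φ(x_1) + Σ_{i=2}^T [Ψ(−x_{i−1})Φ(−x_i) − Ψ(x_{i−1})Φ(x_i)]. -/
noncomputable def fbar (T : ℕ) (x : Fin T → ℝ) : ℝ :=
  -(Psi 1 * Phi (pad T x 0)) +
    ∑ i ∈ Finset.Ico 1 T,
      (Psi (-(pad T x (i-1))) * Phi (-(pad T x i)) - Psi (pad T x (i-1)) * Phi (pad T x i))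

/-- f̄_T viewed as a function on Euclidean space ℝ^T. -/
noncomputable def fbarE (T : ℕ) (x : EuclideanSpace ℝ (Fin T)) : ℝ :=
  fbar T (fun i => x i)

/-! ### Auxiliary lemmas -/

open MeasureTheory

noncomputable def Kpsi : ℝ := Real.sqrt (54 / Real.exp 1)

lemma Kpsi_nonneg : 0 ≤ Kpsi := Real.sqrt_nonneg _

lemma psi_nonneg (x : ℝ) : 0 ≤ Psi x := by
  unfold Psi; split <;> positivity

lemma psi_eq_zero {x : ℝ} (h : x ≤ 1/2) : Psi x = 0 := by rw [Psi, if_pos h]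

lemma psi_le (x : ℝ) : Psi x ≤ Real.exp 1 := by
  rw [Psi]; split
  · positivity
  · apply Real.exp_le_exp.2
    have : 0 ≤ 1/(2*x-1)^2 := by positivity
    linarith

lemma psi_add_le (x : ℝ) : Psi x + Psi (-x) ≤ Real.exp 1 := by
  rcases le_or_gt x (1/2) with h | h
  · rw [psi_eq_zero h]; simpa using psi_le (-x)
  · have : Psi (-x) = 0 := psi_eq_zero (by linarith)
    rw [this]; simpa using psi_le x

lemma aux_bound (u s : ℝ) (hu : 0 < u) (hs : 0 < s) (hus : u^2 * s = 1) :
    Real.exp (1-s) * (4/u^3) ≤ Kpsi := by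
  have key : s * Real.exp (1 - 2*s/3) ≤ 3/2 := by
    have h1 := Real.add_one_le_exp (2*s/3 - 1)
    have h2 : Real.exp (2*s/3 - 1) * Real.exp (1 - 2*s/3) = 1 := by
      rw [← Real.exp_add]; norm_num
    nlinarith [Real.exp_pos (1 - 2*s/3), Real.exp_pos (2*s/3 - 1)]
  have hcube : s^3 * Real.exp (3 - 2*s) ≤ 27/8 := by
    have h2 : Real.exp (1 - 2*s/3)^3 = Real.exp (3 - 2*s) := by
      rw [← Real.exp_nat_mul]; norm_num; ring_nf
    have h3 : (s * Real.exp (1 - 2*s/3))^3 ≤ (3/2)^3 :=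
      pow_le_pow_left₀ (mul_nonneg hs.le (Real.exp_pos _).le) key 3
    calc s^3 * Real.exp (3 - 2*s) = (s * Real.exp (1 - 2*s/3))^3 := by rw [mul_pow, h2]
      _ ≤ (3/2)^3 := h3
      _ ≤ 27/8 := by norm_num
  have hK2 : Kpsi^2 = 54 / Real.exp 1 := Real.sq_sqrt (by positivity)
  have hA : Real.exp (1-s)^2 * Real.exp 1 = Real.exp (3 - 2*s) := by
    rw [pow_two, ← Real.exp_add, ← Real.exp_add]; ring_nf
  have hu6 : s^3 * u^6 = 1 := by
    have h7 : (u^2*s)^3 = 1 := by rw [hus]; norm_num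
    nlinarith [h7]
  have hsq : (Real.exp (1-s) * (4/u^3))^2 ≤ Kpsi^2 := by
    rw [hK2, le_div_iff₀ (Real.exp_pos 1)]
    have hL : (Real.exp (1-s) * (4/u^3))^2 * Real.exp 1 * u^6 = 16 * Real.exp (3-2*s) := by
      have hu0 : u ≠ 0 := ne_of_gt hu
      field_simp
      linear_combination (norm := ring_nf) 16 * hA
    have hP : Real.exp (3-2*s) ≤ 27/8 * u^6 := by
      have h8 : Real.exp (3-2*s) * (s^3*u^6) = Real.exp (3-2*s) := by rw [hu6, mul_one]
      nlinarith [mul_le_mul_of_nonneg_right hcube (le_of_lt (pow_pos hu 6)), h8]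
    nlinarith [hL, hP, pow_pos hu 6]
  nlinarith [hsq, Kpsi_nonneg, Real.exp_pos (1-s),
    mul_pos (Real.exp_pos (1-s)) (by positivity : (0:ℝ) < 4/u^3)]

lemma aux_lin (u s : ℝ) (hu : 0 < u) (hs : 0 < s) (hus : u^2 * s = 1) :
    Real.exp (1-s) ≤ Kpsi * (u/2) := by
  have hK2 : Kpsi^2 = 54 / Real.exp 1 := Real.sq_sqrt (by positivity)
  have key : 2*s ≤ Real.exp (2*s - 1) := by
    have := Real.add_one_le_exp (2*s - 1); linarith
  have hmul : Real.exp (2*s-1) * Real.exp (3 - 2*s) = Real.exp 2 := by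
    rw [← Real.exp_add]; norm_num
  have he1 : Real.exp 1 < 2.7182818286 := Real.exp_one_lt_d9
  have he2 : Real.exp 2 ≤ 27 := by
    rw [show (2:ℝ) = 1 + 1 by norm_num, Real.exp_add]
    nlinarith [Real.exp_pos 1]
  have hA : Real.exp (1-s)^2 * Real.exp 1 = Real.exp (3 - 2*s) := by
    rw [pow_two, ← Real.exp_add, ← Real.exp_add]; ring_nf
  have hsq : Real.exp (1-s)^2 ≤ (Kpsi * (u/2))^2 := by
    have h1 : s * Real.exp (3 - 2*s) ≤ 27/2 := by
      nlinarith [Real.exp_pos (3 - 2*s), Real.exp_pos (2*s-1)]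
    have h2 : (Kpsi * (u/2))^2 = (54 / Real.exp 1) * (u^2/4) := by rw [mul_pow, hK2]; ring
    rw [h2, div_mul_eq_mul_div, le_div_iff₀ (Real.exp_pos 1)]
    rw [hA]
    have h9 : Real.exp (3-2*s) * (u^2*s) = Real.exp (3-2*s) := by rw [hus, mul_one]
    nlinarith [mul_le_mul_of_nonneg_right h1 (sq_nonneg u), h9,
      Real.exp_pos (3-2*s), sq_nonneg u]
  have hrhs : 0 ≤ Kpsi * (u/2) := mul_nonneg Kpsi_nonneg (by linarith)
  nlinarith [Real.exp_pos (1-s)]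

lemma psi_lin {x : ℝ} (h : 1/2 < x) : Psi x ≤ Kpsi * (x - 1/2) := by
  have hu : 0 < 2*x - 1 := by linarith
  have hPsi : Psi x = Real.exp (1 - 1/(2*x-1)^2) := by rw [Psi, if_neg (by linarith)]
  have hx2 : x - 1/2 = (2*x-1)/2 := by ring
  rw [hPsi, hx2]
  exact aux_lin (2*x-1) (1/(2*x-1)^2) hu (by positivity) (by field_simp)

noncomputable def psid (x : ℝ) : ℝ := Real.exp (1 - 1/(2*x - 1)^2) * (4/(2*x-1)^3)

lemma psid_bound {x : ℝ} (h : 1/2 < x) : |psid x| ≤ Kpsi := by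
  have hu : 0 < 2*x - 1 := by linarith
  have hdpos : 0 ≤ psid x := by rw [psid]; positivity
  rw [abs_of_nonneg hdpos, psid]
  exact aux_bound (2*x-1) (1/(2*x-1)^2) hu (by positivity) (by field_simp)

lemma psi_hasDeriv {x : ℝ} (h : 1/2 < x) : HasDerivAt Psi (psid x) x := by
  have hu : (2*x - 1) ≠ 0 := by intro hc; nlinarith
  have h1 : HasDerivAt (fun y : ℝ => 2*y - 1) 2 x := by
    simpa using ((hasDerivAt_id x).const_mul (2:ℝ)).sub_const 1
  have h2 : HasDerivAt (fun y : ℝ => (2*y - 1)^2) (2 * (2*x-1)^1 * 2) x := h1.pow 2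
  have h3 : HasDerivAt (fun y : ℝ => 1 - 1/(2*y - 1)^2)
      (0 - (-(2 * (2*x-1)^1 * 2) / ((2*x-1)^2)^2)) x := by
    have hinv := h2.inv (pow_ne_zero 2 hu)
    have : HasDerivAt (fun y : ℝ => 1/(2*y - 1)^2) (-(2 * (2*x-1)^1 * 2) / ((2*x-1)^2)^2) x := by
      simpa [one_div, Pi.inv_def] using hinv
    simpa [Pi.sub_def] using (hasDerivAt_const x (1:ℝ)).sub this
  have h4 := h3.exp
  have hE : Psi =ᶠ[nhds x] (fun y => Real.exp (1 - 1/(2*y - 1)^2)) := by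
    filter_upwards [Ioi_mem_nhds h] with y hy
    rw [Psi, if_neg (by simp at hy; linarith)]
  refine (HasDerivAt.congr_of_eventuallyEq ?_ hE)
  refine h4.congr_deriv ?_
  unfold psid
  field_simp
  ring

lemma psi_lip (a b : ℝ) : |Psi a - Psi b| ≤ Kpsi * |a - b| := by
  have main : ∀ a b : ℝ, b ≤ a → |Psi a - Psi b| ≤ Kpsi * |a - b| := by
    intro a b hba
    have habs : |a - b| = a - b := abs_of_nonneg (by linarith)
    rcases le_or_gt a (1/2) with ha | ha
    · rw [psi_eq_zero ha, psi_eq_zero (le_trans hba ha)]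
      simp only [sub_zero, abs_zero, sub_self]
      exact mul_nonneg Kpsi_nonneg (abs_nonneg _)
    · rcases le_or_gt b (1/2) with hb | hb
      · rw [psi_eq_zero hb, sub_zero, habs]
        have h1 : Psi a ≤ Kpsi * (a - 1/2) := psi_lin ha
        rw [abs_of_nonneg (psi_nonneg a)]
        calc Psi a ≤ Kpsi * (a - 1/2) := h1
          _ ≤ Kpsi * (a - b) := by
              apply mul_le_mul_of_nonneg_left _ Kpsi_nonneg; linarith
      · have := Convex.norm_image_sub_le_of_norm_hasDerivWithin_le
          (f := Psi) (f' := psid) (s := Set.Ioi (1/2 : ℝ)) (C := Kpsi)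
          (fun y hy => (psi_hasDeriv hy).hasDerivWithinAt)
          (fun y hy => by rw [Real.norm_eq_abs]; exact psid_bound hy)
          (convex_Ioi _) hb ha
        rwa [Real.norm_eq_abs, Real.norm_eq_abs] at this
  rcases le_total b a with h | h
  · exact main a b h
  · rw [abs_sub_comm, abs_sub_comm a b]; exact main b a h

lemma psi_pair (a a' : ℝ) : |Psi (-a) - Psi (-a')| + |Psi a - Psi a'| ≤ Kpsi * |a - a'| := by
  have mixed : ∀ a a' : ℝ, a' < -(1/2) → 1/2 < a →
      |Psi (-a) - Psi (-a')| + |Psi a - Psi a'| ≤ Kpsi * |a - a'| := by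
    intro a a' ha' ha
    have h1 : Psi (-a) = 0 := psi_eq_zero (by linarith)
    have h2 : Psi a' = 0 := psi_eq_zero (by linarith)
    have h3 : Psi (-a') ≤ Kpsi * (-a' - 1/2) := psi_lin (by linarith)
    have h4 : Psi a ≤ Kpsi * (a - 1/2) := psi_lin ha
    have habs : |a - a'| = a - a' := abs_of_nonneg (by linarith)
    rw [h1, h2, zero_sub, abs_neg, sub_zero, abs_of_nonneg (psi_nonneg _),
      abs_of_nonneg (psi_nonneg _), habs]
    nlinarith [Kpsi_nonneg]
  by_cases hc1 : -(1/2) ≤ a ∧ -(1/2) ≤ a'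
  · have h1 : Psi (-a) = 0 := psi_eq_zero (by linarith [hc1.1])
    have h2 : Psi (-a') = 0 := psi_eq_zero (by linarith [hc1.2])
    rw [h1, h2, sub_self, abs_zero, zero_add]
    exact psi_lip a a'
  · by_cases hc2 : a ≤ 1/2 ∧ a' ≤ 1/2
    · have h3 : |Psi a - Psi a'| = 0 := by
        rw [psi_eq_zero hc2.1, psi_eq_zero hc2.2, sub_self, abs_zero]
      rw [h3, add_zero]
      calc |Psi (-a) - Psi (-a')| ≤ Kpsi * |(-a) - (-a')| := psi_lip _ _
        _ = Kpsi * |a - a'| := by rw [neg_sub_neg, abs_sub_comm]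
    · push_neg at hc1 hc2
      rcases lt_or_ge a (-(1/2)) with h5 | h5
      · have h6 : 1/2 < a' := hc2 (by linarith)
        have := mixed a' a h5 h6
        calc |Psi (-a) - Psi (-a')| + |Psi a - Psi a'|
            = |Psi (-a') - Psi (-a)| + |Psi a' - Psi a| := by
              rw [abs_sub_comm, abs_sub_comm (Psi a)]
          _ ≤ Kpsi * |a' - a| := this
          _ = Kpsi * |a - a'| := by rw [abs_sub_comm]
      · have h7 : a' < -(1/2) := hc1 h5
        have h8 : 1/2 < a := by
          by_contra hna
          push_neg at hna
          have := hc2 hna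
          linarith
        exact mixed a a' h7 h8

/-! ### Phi lemmas -/

lemma gauss_integrable : Integrable (fun t : ℝ => Real.exp (-t^2/2)) := by
  have h := integrable_exp_neg_mul_sq (b := (1/2 : ℝ)) (by norm_num)
  convert h using 2 with t
  ring_nf

lemma gauss_le_one (t : ℝ) : Real.exp (-t^2/2) ≤ 1 := by
  rw [Real.exp_le_one_iff]
  nlinarith [sq_nonneg t]

lemma phi_nonneg (x : ℝ) : 0 ≤ Phi x := by
  apply mul_nonneg (Real.sqrt_nonneg _)
  apply setIntegral_nonneg measurableSet_Iic
  intro t _; positivity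

lemma phi_le (x : ℝ) : Phi x ≤ Real.sqrt (Real.exp 1) * Real.sqrt (2*Real.pi) := by
  apply mul_le_mul_of_nonneg_left _ (Real.sqrt_nonneg _)
  have h1 : (∫ t in Set.Iic x, Real.exp (-t^2/2)) ≤ ∫ t : ℝ, Real.exp (-t^2/2) :=
    setIntegral_le_integral gauss_integrable (Filter.Eventually.of_forall (fun t => by positivity))
  have h2 : (∫ t : ℝ, Real.exp (-t^2/2)) = Real.sqrt (2*Real.pi) := by
    have := integral_gaussian (1/2)
    rw [show Real.pi / (1/2) = 2*Real.pi by ring] at this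
    rw [← this]
    congr 1 with t
    ring_nf
  linarith

lemma phi_abs_le (x : ℝ) : |Phi x| ≤ Real.sqrt (Real.exp 1) * Real.sqrt (2*Real.pi) := by
  rw [abs_of_nonneg (phi_nonneg x)]; exact phi_le x

lemma phi_lip (a b : ℝ) : |Phi a - Phi b| ≤ Real.sqrt (Real.exp 1) * |a - b| := by
  have main : ∀ a b : ℝ, b ≤ a → |Phi a - Phi b| ≤ Real.sqrt (Real.exp 1) * |a - b| := by
    intro a b hba
    have hint : (∫ t in Set.Iic a, Real.exp (-t^2/2)) - ∫ t in Set.Iic b, Real.exp (-t^2/2)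
        = ∫ t in Set.Ioc b a, Real.exp (-t^2/2) := by
      rw [intervalIntegral.integral_Iic_sub_Iic gauss_integrable.integrableOn
        gauss_integrable.integrableOn]
      rw [intervalIntegral.integral_of_le hba]
    have hbd : |∫ t in Set.Ioc b a, Real.exp (-t^2/2)| ≤ a - b := by
      have := norm_setIntegral_le_of_norm_le_const (C := 1)
        (s := Set.Ioc b a) (f := fun t : ℝ => Real.exp (-t^2/2)) (μ := volume)
        (by rw [Real.volume_Ioc]; exact ENNReal.ofReal_lt_top)
        (fun t _ => by rw [Real.norm_eq_abs, abs_of_pos (Real.exp_pos _)]; exact gauss_le_one t)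
      rw [Real.volume_real_Ioc_of_le hba, one_mul, Real.norm_eq_abs] at this
      exact this
    have habs : |a - b| = a - b := abs_of_nonneg (by linarith)
    rw [habs]
    calc |Phi a - Phi b| = Real.sqrt (Real.exp 1) * |∫ t in Set.Ioc b a, Real.exp (-t^2/2)| := by
          rw [Phi, Phi, ← mul_sub, abs_mul, abs_of_nonneg (Real.sqrt_nonneg _), hint]
      _ ≤ Real.sqrt (Real.exp 1) * (a - b) :=
          mul_le_mul_of_nonneg_left hbd (Real.sqrt_nonneg _)
  rcases le_total b a with h | h
  · exact main a b h
  · rw [abs_sub_comm, abs_sub_comm a b]; exact main b a h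

/-! ### Numeric constant -/

lemma const_le : Kpsi * (Real.sqrt (Real.exp 1) * Real.sqrt (2*Real.pi))
    + Real.exp 1 * Real.sqrt (Real.exp 1) ≤ 23 := by
  have h54 : Kpsi * Real.sqrt (Real.exp 1) = Real.sqrt 54 := by
    rw [Kpsi, ← Real.sqrt_mul (by positivity)]
    congr 1
    field_simp
  have h108 : Real.sqrt 54 * Real.sqrt (2*Real.pi) = Real.sqrt (108*Real.pi) := by
    rw [← Real.sqrt_mul (by norm_num)]; ring_nf
  have hpi : Real.pi < 3.141593 := Real.pi_lt_d6
  have h1 : Real.sqrt (108*Real.pi) ≤ 18.42 := by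
    calc Real.sqrt (108*Real.pi) ≤ Real.sqrt (18.42^2) := Real.sqrt_le_sqrt (by nlinarith)
      _ = 18.42 := Real.sqrt_sq (by norm_num)
  have he : Real.exp 1 < 2.7182818286 := Real.exp_one_lt_d9
  have hse : Real.sqrt (Real.exp 1) ≤ 1.6488 := by
    calc Real.sqrt (Real.exp 1) ≤ Real.sqrt (1.6488^2) := Real.sqrt_le_sqrt (by nlinarith)
      _ = 1.6488 := Real.sqrt_sq (by norm_num)
  have hprod : Real.exp 1 * Real.sqrt (Real.exp 1) ≤ 2.7182818286 * 1.6488 :=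
    mul_le_mul he.le hse (Real.sqrt_nonneg _) (by norm_num)
  calc Kpsi * (Real.sqrt (Real.exp 1) * Real.sqrt (2*Real.pi)) + Real.exp 1 * Real.sqrt (Real.exp 1)
      = Real.sqrt (108*Real.pi) + Real.exp 1 * Real.sqrt (Real.exp 1) := by
        rw [← mul_assoc, h54, h108]
    _ ≤ 23 := by linarith

/-! ### Per-term Lipschitz bounds -/

lemma term_diff_a (a a' b : ℝ) :
    |(Psi (-a) * Phi (-b) - Psi a * Phi b) - (Psi (-a') * Phi (-b) - Psi a' * Phi b)|
      ≤ Kpsi * (Real.sqrt (Real.exp 1) * Real.sqrt (2*Real.pi)) * |a - a'| := by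
  set M : ℝ := Real.sqrt (Real.exp 1) * Real.sqrt (2*Real.pi) with hM
  have hM0 : 0 ≤ M := mul_nonneg (Real.sqrt_nonneg _) (Real.sqrt_nonneg _)
  have e1 : (Psi (-a) * Phi (-b) - Psi a * Phi b) - (Psi (-a') * Phi (-b) - Psi a' * Phi b)
      = (Psi (-a) - Psi (-a')) * Phi (-b) - (Psi a - Psi a') * Phi b := by ring
  rw [e1]
  calc |(Psi (-a) - Psi (-a')) * Phi (-b) - (Psi a - Psi a') * Phi b|
      ≤ |(Psi (-a) - Psi (-a')) * Phi (-b)| + |(Psi a - Psi a') * Phi b| := abs_sub _ _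
    _ = |Psi (-a) - Psi (-a')| * |Phi (-b)| + |Psi a - Psi a'| * |Phi b| := by
        rw [abs_mul, abs_mul]
    _ ≤ |Psi (-a) - Psi (-a')| * M + |Psi a - Psi a'| * M :=
        add_le_add (mul_le_mul_of_nonneg_left (phi_abs_le _) (abs_nonneg _))
          (mul_le_mul_of_nonneg_left (phi_abs_le _) (abs_nonneg _))
    _ = (|Psi (-a) - Psi (-a')| + |Psi a - Psi a'|) * M := by ring
    _ ≤ (Kpsi * |a - a'|) * M := mul_le_mul_of_nonneg_right (psi_pair a a') hM0
    _ = Kpsi * M * |a - a'| := by ring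

lemma term_diff_b (a b b' : ℝ) :
    |(Psi (-a) * Phi (-b) - Psi a * Phi b) - (Psi (-a) * Phi (-b') - Psi a * Phi b')|
      ≤ Real.exp 1 * Real.sqrt (Real.exp 1) * |b - b'| := by
  have e1 : (Psi (-a) * Phi (-b) - Psi a * Phi b) - (Psi (-a) * Phi (-b') - Psi a * Phi b')
      = Psi (-a) * (Phi (-b) - Phi (-b')) - Psi a * (Phi b - Phi b') := by ring
  rw [e1]
  have h1 : |Phi (-b) - Phi (-b')| ≤ Real.sqrt (Real.exp 1) * |b - b'| := by
    have := phi_lip (-b) (-b')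
    rwa [neg_sub_neg, abs_sub_comm b' b] at this
  have h2 : |Phi b - Phi b'| ≤ Real.sqrt (Real.exp 1) * |b - b'| := phi_lip b b'
  calc |Psi (-a) * (Phi (-b) - Phi (-b')) - Psi a * (Phi b - Phi b')|
      ≤ |Psi (-a) * (Phi (-b) - Phi (-b'))| + |Psi a * (Phi b - Phi b')| := abs_sub _ _
    _ = Psi (-a) * |Phi (-b) - Phi (-b')| + Psi a * |Phi b - Phi b'| := by
        rw [abs_mul, abs_mul, abs_of_nonneg (psi_nonneg _), abs_of_nonneg (psi_nonneg _)]
    _ ≤ Psi (-a) * (Real.sqrt (Real.exp 1) * |b - b'|)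
        + Psi a * (Real.sqrt (Real.exp 1) * |b - b'|) :=
        add_le_add (mul_le_mul_of_nonneg_left h1 (psi_nonneg _))
          (mul_le_mul_of_nonneg_left h2 (psi_nonneg _))
    _ = (Psi a + Psi (-a)) * (Real.sqrt (Real.exp 1) * |b - b'|) := by ring
    _ ≤ Real.exp 1 * (Real.sqrt (Real.exp 1) * |b - b'|) :=
        mul_le_mul_of_nonneg_right (psi_add_le a)
          (mul_nonneg (Real.sqrt_nonneg _) (abs_nonneg _))
    _ = Real.exp 1 * Real.sqrt (Real.exp 1) * |b - b'| := by ring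

/-! ### Main Lipschitz bound for fbar -/

lemma fbar_lip (T : ℕ) (hT : 1 ≤ T) (x y : Fin T → ℝ) :
    |fbar T x - fbar T y| ≤ 23 * ∑ j ∈ Finset.range T, |pad T x j - pad T y j| := by
  set A : ℝ := Kpsi * (Real.sqrt (Real.exp 1) * Real.sqrt (2*Real.pi)) with hA
  set B : ℝ := Real.exp 1 * Real.sqrt (Real.exp 1) with hB
  have hA0 : 0 ≤ A := mul_nonneg Kpsi_nonneg
    (mul_nonneg (Real.sqrt_nonneg _) (Real.sqrt_nonneg _))
  have hB0 : 0 ≤ B := mul_nonneg (Real.exp_pos 1).le (Real.sqrt_nonneg _)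
  set d : ℕ → ℝ := fun j => |pad T x j - pad T y j| with hd
  have hd0 : ∀ j, 0 ≤ d j := fun j => abs_nonneg _
  set S : ℝ := ∑ j ∈ Finset.range T, d j with hS
  have hS0 : 0 ≤ S := Finset.sum_nonneg (fun j _ => hd0 j)
  -- split the difference
  have hsplit : fbar T x - fbar T y =
      -(Psi 1 * (Phi (pad T x 0) - Phi (pad T y 0))) +
      ∑ i ∈ Finset.Ico 1 T,
        ((Psi (-(pad T x (i-1))) * Phi (-(pad T x i)) - Psi (pad T x (i-1)) * Phi (pad T x i))
        - (Psi (-(pad T y (i-1))) * Phi (-(pad T y i)) - Psi (pad T y (i-1)) * Phi (pad T y i))) := by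
    have hsum := Finset.sum_sub_distrib (s := Finset.Ico 1 T)
      (f := fun i => Psi (-(pad T x (i-1))) * Phi (-(pad T x i))
        - Psi (pad T x (i-1)) * Phi (pad T x i))
      (g := fun i => Psi (-(pad T y (i-1))) * Phi (-(pad T y i))
        - Psi (pad T y (i-1)) * Phi (pad T y i))
    rw [fbar, fbar, hsum]; ring
  -- per-term bound
  have hterm : ∀ i ∈ Finset.Ico 1 T,
      |(Psi (-(pad T x (i-1))) * Phi (-(pad T x i)) - Psi (pad T x (i-1)) * Phi (pad T x i))
        - (Psi (-(pad T y (i-1))) * Phi (-(pad T y i)) - Psi (pad T y (i-1)) * Phi (pad T y i))|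
      ≤ A * d (i-1) + B * d i := by
    intro i _
    set a := pad T x (i-1); set a' := pad T y (i-1)
    set b := pad T x i; set b' := pad T y i
    calc |(Psi (-a) * Phi (-b) - Psi a * Phi b) - (Psi (-a') * Phi (-b') - Psi a' * Phi b')|
        ≤ |(Psi (-a) * Phi (-b) - Psi a * Phi b) - (Psi (-a') * Phi (-b) - Psi a' * Phi b)|
          + |(Psi (-a') * Phi (-b) - Psi a' * Phi b) - (Psi (-a') * Phi (-b') - Psi a' * Phi b')| := by
          have := abs_sub_le
            (Psi (-a) * Phi (-b) - Psi a * Phi b)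
            (Psi (-a') * Phi (-b) - Psi a' * Phi b)
            (Psi (-a') * Phi (-b') - Psi a' * Phi b')
          exact this
      _ ≤ A * |a - a'| + B * |b - b'| :=
          add_le_add (term_diff_a a a' b) (term_diff_b a' b b')
      _ = A * d (i-1) + B * d i := rfl
  -- bound on the sum
  have hsum1 : ∑ i ∈ Finset.Ico 1 T, d (i-1) ≤ S := by
    rw [Finset.sum_Ico_eq_sum_range]
    have : ∀ j, d (1 + j - 1) = d j := fun j => by congr 1; omega
    rw [Finset.sum_congr rfl (fun j _ => this j)]
    exact Finset.sum_le_sum_of_subset_of_nonneg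
      (Finset.range_subset_range.2 (by omega)) (fun j _ _ => hd0 j)
  have hsum2 : d 0 + ∑ i ∈ Finset.Ico 1 T, d i = S := by
    rw [hS, Finset.range_eq_Ico, Finset.sum_eq_sum_Ico_succ_bot (by omega : 0 < T)]
  calc |fbar T x - fbar T y|
      ≤ |Psi 1 * (Phi (pad T x 0) - Phi (pad T y 0))|
        + |∑ i ∈ Finset.Ico 1 T,
        ((Psi (-(pad T x (i-1))) * Phi (-(pad T x i)) - Psi (pad T x (i-1)) * Phi (pad T x i))
        - (Psi (-(pad T y (i-1))) * Phi (-(pad T y i)) - Psi (pad T y (i-1)) * Phi (pad T y i)))| := by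
        rw [hsplit]
        refine (abs_add_le _ _).trans ?_
        rw [abs_neg]
    _ ≤ B * d 0 + ∑ i ∈ Finset.Ico 1 T, (A * d (i-1) + B * d i) := by
        apply add_le_add
        · rw [abs_mul, abs_of_nonneg (psi_nonneg 1)]
          calc Psi 1 * |Phi (pad T x 0) - Phi (pad T y 0)|
              ≤ Real.exp 1 * (Real.sqrt (Real.exp 1) * d 0) := by
                apply mul_le_mul (psi_le 1) (phi_lip _ _) (abs_nonneg _) (Real.exp_pos 1).le
            _ = B * d 0 := by rw [hB]; ring
        · exact (Finset.abs_sum_le_sum_abs _ _).trans (Finset.sum_le_sum hterm)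
    _ = B * d 0 + A * (∑ i ∈ Finset.Ico 1 T, d (i-1)) + B * (∑ i ∈ Finset.Ico 1 T, d i) := by
        rw [Finset.sum_add_distrib, ← Finset.mul_sum, ← Finset.mul_sum]; ring
    _ ≤ B * d 0 + A * S + B * (S - d 0) := by
        have h1 : ∑ i ∈ Finset.Ico 1 T, d i = S - d 0 := by linarith [hsum2]
        rw [h1]
        gcongr
    _ = (A + B) * S := by ring
    _ ≤ 23 * S := by
        apply mul_le_mul_of_nonneg_right _ hS0
        exact const_le

/-! ### Main theorem -/

/-- For every `T ≥ 1` and `x ∈ ℝ^T`, the Euclidean norm of the gradient of f̄_T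
satisfies ‖∇f̄_T(x)‖ ≤ 23·√T. -/
theorem stmt11 (T : ℕ) (hT : 1 ≤ T) (x : EuclideanSpace ℝ (Fin T)) :
    ‖gradient (fbarE T) x‖ ≤ 23 * Real.sqrt T := by
  have hK0 : (0:ℝ) ≤ 23 * Real.sqrt T := by positivity
  have hlip : LipschitzWith (Real.toNNReal (23 * Real.sqrt T)) (fbarE T) := by
    apply LipschitzWith.of_dist_le_mul
    intro u v
    rw [Real.dist_eq, dist_eq_norm, Real.coe_toNNReal _ hK0]
    have h1 := fbar_lip T hT (fun i => u i) (fun i => v i)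
    have h2 : ∑ j ∈ Finset.range T, |pad T (fun i => u i) j - pad T (fun i => v i) j|
        = ∑ i : Fin T, |u i - v i| := by
      rw [← Fin.sum_univ_eq_sum_range
        (fun j => |pad T (fun i => u i) j - pad T (fun i => v i) j|) T]
      apply Finset.sum_congr rfl
      intro i _
      rw [pad, pad, dif_pos i.isLt, dif_pos i.isLt]
    have h3 : ∑ i : Fin T, |u i - v i| ≤ Real.sqrt T * ‖u - v‖ := by
      have hcs : (∑ i : Fin T, |u i - v i|)^2 ≤ (T:ℝ) * ∑ i : Fin T, |u i - v i|^2 := by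
        have := sq_sum_le_card_mul_sum_sq
          (s := (Finset.univ : Finset (Fin T))) (f := fun i => |u i - v i|)
        simpa using this
      have hnorm : ‖u - v‖ = Real.sqrt (∑ i : Fin T, (u i - v i)^2) := by
        rw [EuclideanSpace.norm_eq]
        congr 1
        apply Finset.sum_congr rfl
        intro i _
        simp [Real.norm_eq_abs, sq_abs]
      have heq : ∑ i : Fin T, |u i - v i|^2 = ∑ i : Fin T, (u i - v i)^2 := by
        apply Finset.sum_congr rfl; intro i _; rw [sq_abs]
      calc ∑ i : Fin T, |u i - v i|
          = Real.sqrt ((∑ i : Fin T, |u i - v i|)^2) := by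
            rw [Real.sqrt_sq (Finset.sum_nonneg (fun i _ => abs_nonneg _))]
        _ ≤ Real.sqrt ((T:ℝ) * ∑ i : Fin T, (u i - v i)^2) := by
            apply Real.sqrt_le_sqrt
            rw [← heq]; exact hcs
        _ = Real.sqrt T * Real.sqrt (∑ i : Fin T, (u i - v i)^2) :=
            Real.sqrt_mul (Nat.cast_nonneg T) _
        _ = Real.sqrt T * ‖u - v‖ := by rw [hnorm]
    calc |fbarE T u - fbarE T v|
        ≤ 23 * ∑ i : Fin T, |u i - v i| := by
          rw [fbarE, fbarE]
          calc |fbar T (fun i => u i) - fbar T (fun i => v i)|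
              ≤ 23 * ∑ j ∈ Finset.range T,
                  |pad T (fun i => u i) j - pad T (fun i => v i) j| := h1
            _ = 23 * ∑ i : Fin T, |u i - v i| := by rw [h2]
      _ ≤ 23 * (Real.sqrt T * ‖u - v‖) := by
          apply mul_le_mul_of_nonneg_left h3 (by norm_num)
      _ = 23 * Real.sqrt T * ‖u - v‖ := by ring
  have hnorm : ‖gradient (fbarE T) x‖ = ‖fderiv ℝ (fbarE T) x‖ := by
    unfold gradient
    rw [LinearIsometryEquiv.norm_map]
  rw [hnorm]
  calc ‖fderiv ℝ (fbarE T) x‖ ≤ (Real.toNNReal (23 * Real.sqrt T) : ℝ) :=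
        norm_fderiv_le_of_lipschitz ℝ hlip
    _ = 23 * Real.sqrt T := Real.coe_toNNReal _ hK0
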